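/- Let A be a Noetherian local ring with maximal ideal m, assume A is m-adically complete (IsAdicComplete m A), equip A with the m-adic topology, and let y_1, …, y_m be generators of m. Then every element f of A is admissible: there exists a family c : (Fin m → ℕ) → A such that every c_β is either zero or a unit of A, and the family (c_β · y_1^{β_1} ⋯ y_m^{β_m})_{β ∈ ℕ^m} has sum f (HasSum) in the m-adic topology of A. -/

import Mathlib

open scoped Pointwise

/-- **Proposition 2.4.4(1)** (in the complete local ring).  Let `A` be a Noetherian local
ring with maximal ideal `m`, complete for the `m`-adic topology, and let `y 0, …, y (m-1)`
generate `m`.  Then every element `f` of `A` is admissible: it has an expansion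
`f = Σ_β c_β y^β`, convergent for the `m`-adic topology, in which each coefficient `c_β`
is either zero or a unit of `A`. -/
theorem admissible_expansion_of_complete
    (A : Type*) [CommRing A] [IsNoetherianRing A] [IsLocalRing A]
    [IsAdicComplete (IsLocalRing.maximalIdeal A) A]
    (m : ℕ) (y : Fin m → A)
    (hy : Ideal.span (Set.range y) = IsLocalRing.maximalIdeal A)
    (f : A) :
    ∃ c : (Fin m → ℕ) → A,
      (∀ β, c β = 0 ∨ IsUnit (c β)) ∧
      @HasSum A (Fin m → ℕ) _ ((IsLocalRing.maximalIdeal A).adicTopology)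
        (fun β => c β * ∏ i, y i ^ β i) f (SummationFilter.unconditional (Fin m → ℕ)) := by
  set M := IsLocalRing.maximalIdeal A with hM
  set mono : (Fin m → ℕ) → A := fun β => ∏ i, y i ^ β i with hmonodef
  -- each y i lies in M
  have hyM : ∀ i, y i ∈ M := fun i => hy ▸ Ideal.subset_span ⟨i, rfl⟩
  -- monomials of degree n lie in M ^ n
  have hmono : ∀ β : Fin m → ℕ, mono β ∈ M ^ (∑ i, β i) := by
    intro β
    rw [← Finset.prod_pow_eq_pow_sum]
    exact Ideal.prod_mem_prod fun i _ => Ideal.pow_mem_pow (hyM i) _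
  -- M ^ n is spanned by monomials of degree n
  have hspan : ∀ n : ℕ, M ^ n ≤ Ideal.span (mono '' {β | ∑ i, β i = n}) := by
    intro n
    induction n with
    | zero =>
      have h1 : (1 : A) ∈ Ideal.span (mono '' {β | ∑ i, β i = 0}) :=
        Ideal.subset_span ⟨0, by simp, by simp [hmonodef]⟩
      intro x _
      exact (Ideal.eq_top_iff_one _).mpr h1 ▸ Submodule.mem_top
    | succ n ih =>
      have hsub : (mono '' {β | ∑ i, β i = n}) * Set.range y
          ⊆ mono '' {β | ∑ i, β i = n + 1} := by
        rintro _ ⟨_, ⟨β, hβ, rfl⟩, _, ⟨j, rfl⟩, rfl⟩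
        refine ⟨β + Pi.single j 1, ?_, ?_⟩
        · have hβ' : ∑ i, β i = n := hβ
          simp only [Set.mem_setOf_eq, Pi.add_apply, Finset.sum_add_distrib, hβ']
          simp
        · simp only [hmonodef, Pi.add_apply, pow_add, Finset.prod_mul_distrib]
          congr 1
          rw [Finset.prod_eq_single j (fun i _ hij => by simp [Pi.single_eq_of_ne hij])
            (by simp)]
          simp
      calc M ^ (n + 1) = M ^ n * M := pow_succ M n
        _ ≤ Ideal.span (mono '' {β | ∑ i, β i = n}) * Ideal.span (Set.range y) := by
            rw [hy]; exact Ideal.mul_mono_left ih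
        _ = Ideal.span ((mono '' {β | ∑ i, β i = n}) * (Set.range y)) :=
            Ideal.span_mul_span' _ _
        _ ≤ Ideal.span (mono '' {β | ∑ i, β i = n + 1}) := Ideal.span_mono hsub
  -- the key one-step splitting
  have step : ∀ (n : ℕ) (r : A), r ∈ M ^ n → ∃ a : (Fin m → ℕ) → A,
      (∀ β, a β = 0 ∨ IsUnit (a β)) ∧
      r - ∑ β ∈ Finset.Nat.antidiagonalTuple m n, a β * mono β ∈ M ^ (n + 1) := by
    intro n r hr
    set s := Finset.Nat.antidiagonalTuple m n with hs
    have hset : ({β | ∑ i, β i = n} : Set (Fin m → ℕ)) = (↑s : Set (Fin m → ℕ)) := by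
      ext β; simp [hs, Finset.Nat.mem_antidiagonalTuple]
    have hr' := hspan n hr
    rw [hset, Set.image_eq_range] at hr'
    obtain ⟨c', hc'⟩ := (Submodule.mem_span_range_iff_exists_fun (R := A)).mp hr'
    classical
    set g : (Fin m → ℕ) → A := fun β => if h : β ∈ s then c' ⟨β, h⟩ else 0 with hg
    set a : (Fin m → ℕ) → A := fun β => if IsUnit (g β) then g β else 0 with ha
    have hgr : ∑ β ∈ s, g β * mono β = r := by
      rw [← hc']
      rw [← Finset.sum_finset_coe (fun β => g β * mono β) s]
      refine Finset.sum_congr rfl fun b _ => ?_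
      have hb : (b : Fin m → ℕ) ∈ s := b.2
      simp [hg, hb, smul_eq_mul]
    refine ⟨a, fun β => ?_, ?_⟩
    · by_cases h : IsUnit (g β)
      · right; simpa [ha, h] using h
      · left; simp [ha, h]
    · have : r - ∑ β ∈ s, a β * mono β = ∑ β ∈ s, (g β - a β) * mono β := by
        rw [← hgr, ← Finset.sum_sub_distrib]
        exact Finset.sum_congr rfl fun β _ => (sub_mul _ _ _).symm
      rw [this, pow_succ']
      refine Submodule.sum_mem _ fun β hβ => ?_
      have hdeg : ∑ i, β i = n := Finset.Nat.mem_antidiagonalTuple.mp hβ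
      have hcoef : g β - a β ∈ M := by
        by_cases h : IsUnit (g β)
        · simp only [ha]
          rw [if_pos h, sub_self]
          exact zero_mem _
        · simp only [ha]
          rw [if_neg h, sub_zero]
          exact (IsLocalRing.mem_maximalIdeal (g β)).mpr h
      exact Ideal.mul_mem_mul hcoef (hdeg ▸ hmono β)
  choose a ha hrem using step
  -- recursive construction of the remainders
  let rem : (n : ℕ) → {r : A // r ∈ M ^ n} := fun n =>
    Nat.rec (motive := fun n => {r : A // r ∈ M ^ n})
      ⟨f, by simpa using Submodule.mem_top⟩
      (fun k p => ⟨p.1 - ∑ β ∈ Finset.Nat.antidiagonalTuple m k, a k p.1 p.2 β * mono β,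
        hrem k p.1 p.2⟩) n
  have rem_zero : (rem 0).1 = f := rfl
  have rem_succ : ∀ k, (rem (k + 1)).1
      = (rem k).1 - ∑ β ∈ Finset.Nat.antidiagonalTuple m k,
          a k (rem k).1 (rem k).2 β * mono β := fun k => rfl
  set c : (Fin m → ℕ) → A := fun β =>
    a (∑ i, β i) (rem (∑ i, β i)).1 (rem (∑ i, β i)).2 β with hc
  have hcdeg : ∀ (β : Fin m → ℕ) (k : ℕ), (∑ i, β i) = k →
      c β = a k (rem k).1 (rem k).2 β := by
    rintro β k rfl; rfl
  -- partial sums over multi-indices of degree < n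
  set S : ℕ → Finset (Fin m → ℕ) := fun n =>
    (Finset.range n).biUnion (fun k => Finset.Nat.antidiagonalTuple m k) with hS
  have key : ∀ n, f - ∑ β ∈ S n, c β * mono β = (rem n).1 := by
    intro n
    induction n with
    | zero => simp [hS, rem_zero]
    | succ n ih =>
      have hdisj : Disjoint (Finset.Nat.antidiagonalTuple m n) (S n) := by
        rw [Finset.disjoint_left]
        intro β hβ hβ'
        rw [Finset.Nat.mem_antidiagonalTuple] at hβ
        obtain ⟨k, hk, hk'⟩ := Finset.mem_biUnion.mp hβ'
        rw [Finset.Nat.mem_antidiagonalTuple] at hk'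
        rw [Finset.mem_range] at hk
        omega
      have hunion : S (n + 1) = Finset.Nat.antidiagonalTuple m n ∪ S n := by
        simp only [hS, Finset.range_add_one, Finset.biUnion_insert]
      rw [hunion, Finset.sum_union hdisj, rem_succ]
      have heq : ∑ β ∈ Finset.Nat.antidiagonalTuple m n, c β * mono β
          = ∑ β ∈ Finset.Nat.antidiagonalTuple m n,
              a n (rem n).1 (rem n).2 β * mono β :=
        Finset.sum_congr rfl fun β hβ => by
          rw [hcdeg β n (Finset.Nat.mem_antidiagonalTuple.mp hβ)]
      rw [heq]
      linear_combination ih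
  refine ⟨c, fun β => ha _ _ _ β, ?_⟩
  show Filter.Tendsto (fun s : Finset (Fin m → ℕ) => ∑ β ∈ s, c β * mono β)
    Filter.atTop (@nhds A M.adicTopology f)
  rw [(Ideal.hasBasis_nhds_adic M f).tendsto_right_iff]
  intro n _
  filter_upwards [Filter.eventually_ge_atTop (S n)] with t ht
  refine ⟨∑ β ∈ t, c β * mono β - f, ?_, by ring⟩
  have hsplit : ∑ β ∈ t, c β * mono β
      = ∑ β ∈ t \ S n, c β * mono β + ∑ β ∈ S n, c β * mono β :=
    (Finset.sum_sdiff ht).symm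
  rw [hsplit]
  have h1 : ∑ β ∈ S n, c β * mono β - f = -(rem n).1 := by
    rw [← key n]; ring
  have h2 : ∑ β ∈ t \ S n, c β * mono β ∈ M ^ n := by
    refine Submodule.sum_mem _ fun β hβ => ?_
    have hβ' : β ∉ S n := (Finset.mem_sdiff.mp hβ).2
    have hdeg : n ≤ ∑ i, β i := by
      by_contra h
      push_neg at h
      exact hβ' (Finset.mem_biUnion.mpr ⟨∑ i, β i, Finset.mem_range.mpr h,
        Finset.Nat.mem_antidiagonalTuple.mpr rfl⟩)
    exact Ideal.mul_mem_left _ _ (Ideal.pow_le_pow_right hdeg (hmono β))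
  have : ∑ β ∈ t \ S n, c β * mono β + ∑ β ∈ S n, c β * mono β - f
      = ∑ β ∈ t \ S n, c β * mono β + (∑ β ∈ S n, c β * mono β - f) := by ring
  rw [this, h1]
  exact Submodule.add_mem _ h2 (Submodule.neg_mem _ (rem n).2)
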